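/- Birkhoff's contraction theorem: if L is an N×N matrix with all entries strictly positive and δ(L) = sup{ρ_H(Lx, Ly) : x, y with strictly positive components} is its projective diameter, then for all x, y with strictly positive components, ρ_H(Lx, Ly) ≤ tanh(δ(L)/4) · ρ_H(x,y), where tanh(δ(L)/4) < 1 when δ(L) < ∞. -/

import Mathlib

set_option maxHeartbeats 1000000


/-- The Hilbert projective metric on vectors with strictly positive
components: `ρ_H(x,y) = max_i ln(y_i/x_i) + max_i ln(x_i/y_i)`. -/
noncomputable def rhoH {N : ℕ} [NeZero N] (x y : Fin N → ℝ) : ℝ :=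
  Finset.univ.sup' Finset.univ_nonempty (fun i => Real.log (y i / x i)) +
    Finset.univ.sup' Finset.univ_nonempty (fun i => Real.log (x i / y i))

open Real Finset

lemma mysup'_eq {N : ℕ} [NeZero N] (f : Fin N → ℝ) (a : ℝ) (h1 : ∀ i, f i ≤ a)
    (h2 : ∃ i, f i = a) :
    Finset.univ.sup' Finset.univ_nonempty f = a := by
  refine le_antisymm (Finset.sup'_le _ _ fun i _ => h1 i) ?_
  obtain ⟨i, hi⟩ := h2
  exact hi ▸ Finset.le_sup' f (Finset.mem_univ i)

lemma rhoH_ratio {N : ℕ} [NeZero N] (a b g : Fin N → ℝ) (M m : ℝ)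
    (ha : ∀ i, 0 < a i) (hb : ∀ i, b i = g i * a i)
    (hM : ∀ i, g i ≤ M) (hm : ∀ i, m ≤ g i)
    (hMex : ∃ i, g i = M) (hmex : ∃ i, g i = m) (hmpos : 0 < m) :
    rhoH a b = Real.log M - Real.log m := by
  have hgpos : ∀ i, 0 < g i := fun i => lt_of_lt_of_le hmpos (hm i)
  have hq : ∀ i, b i / a i = g i := fun i => by
    rw [hb i, mul_div_assoc, div_self (ha i).ne', mul_one]
  have hq' : ∀ i, a i / b i = (g i)⁻¹ := fun i => by
    rw [hb i, mul_comm, ← div_div, div_self (ha i).ne', one_div]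
  unfold rhoH
  have e1 : Finset.univ.sup' Finset.univ_nonempty (fun i => Real.log (b i / a i))
      = Real.log M := by
    apply mysup'_eq
    · intro i; rw [hq i]; exact Real.log_le_log (hgpos i) (hM i)
    · obtain ⟨i, hi⟩ := hMex; exact ⟨i, by rw [hq i, hi]⟩
  have e2 : Finset.univ.sup' Finset.univ_nonempty (fun i => Real.log (a i / b i))
      = Real.log m⁻¹ := by
    apply mysup'_eq
    · intro i; rw [hq' i]
      exact Real.log_le_log (inv_pos.2 (hgpos i)) (inv_anti₀ hmpos (hm i))
    · obtain ⟨i, hi⟩ := hmex; exact ⟨i, by rw [hq' i, hi]⟩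
  rw [e1, e2, Real.log_inv]; ring

lemma mulVec_lin {N : ℕ} (L : Matrix (Fin N) (Fin N) ℝ) (a b : ℝ) (w z : Fin N → ℝ)
    (i : Fin N) :
    L.mulVec (fun k => a * w k + b * z k) i = a * L.mulVec w i + b * L.mulVec z i := by
  simp only [Matrix.mulVec, dotProduct]
  have h : ∀ k : Fin N, L i k * (a * w k + b * z k)
      = a * (L i k * w k) + b * (L i k * z k) := fun k => by ring
  rw [Finset.sum_congr rfl (fun k _ => h k), Finset.sum_add_distrib,
    ← Finset.mul_sum, ← Finset.mul_sum]

lemma mulVec_pos {N : ℕ} (L : Matrix (Fin N) (Fin N) ℝ) (hL : ∀ i j, 0 < L i j)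
    (u : Fin N → ℝ) (hu : ∀ k, 0 ≤ u k) (k₀ : Fin N) (hk₀ : 0 < u k₀) (i : Fin N) :
    0 < L.mulVec u i := by
  simp only [Matrix.mulVec, dotProduct]
  exact Finset.sum_pos' (fun k _ => mul_nonneg (hL i k).le (hu k))
    ⟨k₀, Finset.mem_univ _, mul_pos (hL i k₀) hk₀⟩

lemma rhoH_bddAbove {N : ℕ} [NeZero N] (L : Matrix (Fin N) (Fin N) ℝ)
    (hL : ∀ i j, 0 < L i j) :
    BddAbove {d : ℝ | ∃ x y : Fin N → ℝ,
      (∀ i, 0 < x i) ∧ (∀ i, 0 < y i) ∧ d = rhoH (L.mulVec x) (L.mulVec y)} := by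
  set E : Fin N × Fin N → ℝ := fun p => L p.1 p.2 with hE
  set M₀ : ℝ := Finset.univ.sup' Finset.univ_nonempty E with hM₀
  set m₀ : ℝ := Finset.univ.inf' Finset.univ_nonempty E with hm₀
  obtain ⟨p, -, hp⟩ := Finset.exists_mem_eq_inf' Finset.univ_nonempty E
  have hm₀pos : 0 < m₀ := by rw [hm₀, hp]; exact hL p.1 p.2
  have hEle : ∀ i j, L i j ≤ M₀ := fun i j => Finset.le_sup' E (Finset.mem_univ (i, j))
  have hEge : ∀ i j, m₀ ≤ L i j := fun i j => Finset.inf'_le E (Finset.mem_univ (i, j))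
  refine ⟨Real.log (M₀^2/m₀^2), fun d hd => ?_⟩
  obtain ⟨x, y, hx, hy, rfl⟩ := hd
  have hM₀pos : 0 < M₀ := lt_of_lt_of_le hm₀pos (le_trans (hEge p.1 p.2) (hEle p.1 p.2))
  set Sx : ℝ := ∑ k, x k with hSx
  set Sy : ℝ := ∑ k, y k with hSy
  have hSxpos : 0 < Sx := Finset.sum_pos (fun k _ => hx k) Finset.univ_nonempty
  have hSypos : 0 < Sy := Finset.sum_pos (fun k _ => hy k) Finset.univ_nonempty
  have hub : ∀ (z : Fin N → ℝ), (∀ k, 0 < z k) → ∀ i,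
      L.mulVec z i ≤ M₀ * ∑ k, z k := by
    intro z hz i
    simp only [Matrix.mulVec, dotProduct]
    rw [Finset.mul_sum]
    exact Finset.sum_le_sum fun k _ => mul_le_mul_of_nonneg_right (hEle i k) (hz k).le
  have hlb : ∀ (z : Fin N → ℝ), (∀ k, 0 < z k) → ∀ i,
      m₀ * ∑ k, z k ≤ L.mulVec z i := by
    intro z hz i
    simp only [Matrix.mulVec, dotProduct]
    rw [Finset.mul_sum]
    exact Finset.sum_le_sum fun k _ => mul_le_mul_of_nonneg_right (hEge i k) (hz k).le
  have hLxpos : ∀ i, 0 < L.mulVec x i := fun i =>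
    lt_of_lt_of_le (mul_pos hm₀pos hSxpos) (hlb x hx i)
  have hLypos : ∀ i, 0 < L.mulVec y i := fun i =>
    lt_of_lt_of_le (mul_pos hm₀pos hSypos) (hlb y hy i)
  unfold rhoH
  have e1 : Finset.univ.sup' Finset.univ_nonempty
      (fun i => Real.log (L.mulVec y i / L.mulVec x i)) ≤ Real.log (M₀*Sy/(m₀*Sx)) := by
    apply Finset.sup'_le
    intro i _
    apply Real.log_le_log (div_pos (hLypos i) (hLxpos i))
    exact div_le_div₀ (by positivity) (hub y hy i) (mul_pos hm₀pos hSxpos) (hlb x hx i)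
  have e2 : Finset.univ.sup' Finset.univ_nonempty
      (fun i => Real.log (L.mulVec x i / L.mulVec y i)) ≤ Real.log (M₀*Sx/(m₀*Sy)) := by
    apply Finset.sup'_le
    intro i _
    apply Real.log_le_log (div_pos (hLxpos i) (hLypos i))
    exact div_le_div₀ (by positivity) (hub x hx i) (mul_pos hm₀pos hSypos) (hlb y hy i)
  have e3 : Real.log (M₀*Sy/(m₀*Sx)) + Real.log (M₀*Sx/(m₀*Sy)) = Real.log (M₀^2/m₀^2) := by
    rw [← Real.log_mul (by positivity) (by positivity)]
    congr 1
    field_simp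
  linarith [e1, e2]

lemma tanh_eq' (x : ℝ) : Real.tanh x = (Real.exp (2*x) - 1) / (Real.exp (2*x) + 1) := by
  rw [Real.tanh_eq_sinh_div_cosh, Real.sinh_eq, Real.cosh_eq]
  have h1 : Real.exp x * Real.exp (-x) = 1 := by rw [← Real.exp_add]; simp
  have h2 : Real.exp (2*x) = Real.exp x * Real.exp x := by
    rw [← Real.exp_add]; ring_nf
  have h3 := Real.exp_pos x
  have h4 := Real.exp_pos (-x)
  rw [div_eq_div_iff (by positivity) (by positivity)]
  nlinarith

lemma tanh_mono {a b : ℝ} (h : a ≤ b) : Real.tanh a ≤ Real.tanh b := by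
  rw [tanh_eq', tanh_eq']
  have hE := Real.exp_pos (2*a)
  have hF := Real.exp_pos (2*b)
  have : Real.exp (2*a) ≤ Real.exp (2*b) := Real.exp_le_exp.2 (by linarith)
  rw [div_le_div_iff₀ (by linarith) (by linarith)]
  nlinarith

lemma tanh_lt_one' (x : ℝ) : Real.tanh x < 1 := by
  rw [tanh_eq']
  have hE := Real.exp_pos (2*x)
  rw [div_lt_one (by linarith)]
  linarith

lemma tanh_val {s S : ℝ} (hs : 0 < s) (hsS : s ≤ S) (hS : S < 1) :
    Real.tanh ((Real.log (S/(1-S)) + Real.log ((1-s)/s))/4)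
      = (S - s)/(S*(1-s)+s*(1-S)+2*Real.sqrt (S*s*(1-S)*(1-s))) := by
  have hS0 : 0 < S := lt_of_lt_of_le hs hsS
  have hs1 : s < 1 := lt_of_le_of_lt hsS hS
  set A := Real.sqrt (S*(1-s)) with hA
  set B := Real.sqrt (s*(1-S)) with hB
  have hApos : 0 < A := Real.sqrt_pos.2 (by nlinarith)
  have hBpos : 0 < B := Real.sqrt_pos.2 (by nlinarith)
  have hA2 : A^2 = S*(1-s) := Real.sq_sqrt (by nlinarith)
  have hB2 : B^2 = s*(1-S) := Real.sq_sqrt (by nlinarith)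
  have hAB : Real.sqrt (S*s*(1-S)*(1-s)) = A*B := by
    rw [hA, hB, ← Real.sqrt_mul (by nlinarith)]
    congr 1; ring
  have hexp : Real.exp (2 * ((Real.log (S/(1-S)) + Real.log ((1-s)/s))/4)) = A/B := by
    have h1 : Real.log (S/(1-S)) + Real.log ((1-s)/s)
        = Real.log ((S*(1-s))/(s*(1-S))) := by
      rw [← Real.log_mul (div_pos hS0 (by linarith)).ne' (div_pos (by linarith) hs).ne']
      congr 1
      field_simp
    rw [h1]
    have h2 : (S*(1-s))/(s*(1-S)) = (A/B)^2 := by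
      rw [div_pow, hA2, hB2]
    rw [h2, Real.log_pow]
    push_cast
    rw [show 2 * (2 * Real.log (A/B) / 4) = Real.log (A/B) by ring]
    exact Real.exp_log (by positivity)
  rw [tanh_eq', hexp, hAB]
  rw [div_eq_div_iff (by positivity) (by nlinarith [mul_pos hApos hBpos])]
  have h3 : A/B - 1 = (A - B)/B := by field_simp
  have h4 : A/B + 1 = (A + B)/B := by field_simp
  rw [h3, h4]
  field_simp
  nlinarith [hA2, hB2, sq_nonneg (A-B), sq_nonneg (A+B)]

lemma core {s S α β : ℝ} (hs : 0 < s) (hsS : s ≤ S) (hS : S < 1)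
    (hα : 0 < α) (hβ : α ≤ β) :
    Real.log (α+(β-α)*S) - Real.log (α+(β-α)*s) ≤
      (S - s)/(S*(1-s)+s*(1-S)+2*Real.sqrt (S*s*(1-S)*(1-s))) * (Real.log β - Real.log α) := by
  have hS0 : 0 < S := lt_of_lt_of_le hs hsS
  have hs1 : s < 1 := lt_of_le_of_lt hsS hS
  set Q : ℝ := Real.sqrt (S*s*(1-S)*(1-s)) with hQ
  set W : ℝ := S*(1-s)+s*(1-S)+2*Q with hW
  have hQnn : 0 ≤ Q := Real.sqrt_nonneg _
  have hprod : (0:ℝ) < S*s*(1-S)*(1-s) :=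
    mul_pos (mul_pos (mul_pos hS0 hs) (by linarith)) (by linarith)
  have hQ2 : Q^2 = S*s*(1-S)*(1-s) := Real.sq_sqrt hprod.le
  have hWpos : 0 < W := by nlinarith
  set θ : ℝ := (S - s)/W with hθ
  have hθnn : 0 ≤ θ := div_nonneg (by linarith) hWpos.le
  set G : ℝ → ℝ := fun b => θ * Real.log b - Real.log (α+(b-α)*S) + Real.log (α+(b-α)*s)
    with hG
  have hPpos : ∀ b ∈ Set.Ici α, 0 < α+(b-α)*S := by
    intro b hb; simp only [Set.mem_Ici] at hb; nlinarith
  have hQpos : ∀ b ∈ Set.Ici α, 0 < α+(b-α)*s := by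
    intro b hb; simp only [Set.mem_Ici] at hb; nlinarith
  have hderiv : ∀ b ∈ Set.Ici α,
      HasDerivAt G (θ * b⁻¹ - S/(α+(b-α)*S) + s/(α+(b-α)*s)) b := by
    intro b hb
    have hb0 : 0 < b := lt_of_lt_of_le hα hb
    have d1 : HasDerivAt (fun x : ℝ => θ * Real.log x) (θ * b⁻¹) b :=
      (Real.hasDerivAt_log hb0.ne').const_mul θ
    have dP : HasDerivAt (fun x : ℝ => α+(x-α)*S) S b := by
      simpa using (((hasDerivAt_id b).sub_const α).mul_const S).const_add α
    have dQ : HasDerivAt (fun x : ℝ => α+(x-α)*s) s b := by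
      simpa using (((hasDerivAt_id b).sub_const α).mul_const s).const_add α
    have d2 : HasDerivAt (fun x : ℝ => Real.log (α+(x-α)*S)) (S/(α+(b-α)*S)) b :=
      dP.log (hPpos b hb).ne'
    have d3 : HasDerivAt (fun x : ℝ => Real.log (α+(x-α)*s)) (s/(α+(b-α)*s)) b :=
      dQ.log (hQpos b hb).ne'
    exact (d1.sub d2).add d3
  have hd_nonneg : ∀ b ∈ Set.Ici α,
      0 ≤ θ * b⁻¹ - S/(α+(b-α)*S) + s/(α+(b-α)*s) := by
    intro b hb
    have hb' : α ≤ b := hb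
    have hb0 : 0 < b := lt_of_lt_of_le hα hb'
    have hP := hPpos b hb
    have hQp := hQpos b hb
    -- key algebraic inequality
    set c : ℝ := Real.sqrt (S*s) with hc
    set d : ℝ := Real.sqrt ((1-S)*(1-s)) with hd
    have hc2 : c^2 = S*s := Real.sq_sqrt (by nlinarith)
    have hd2 : d^2 = (1-S)*(1-s) := Real.sq_sqrt (by nlinarith)
    have hcd : Q = c*d := by
      rw [hQ, hc, hd, ← Real.sqrt_mul (by nlinarith)]
      congr 1; ring
    have hexpand : (α+(b-α)*S)*(α+(b-α)*s) - α*b*W = (α*d - b*c)^2 := by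
      rw [hW, hcd]
      linear_combination (-(α^2)) * hd2 + (-(b^2)) * hc2
    have hkey : α*b*W ≤ (α+(b-α)*S)*(α+(b-α)*s) := by
      nlinarith [hexpand, sq_nonneg (α*d - b*c)]
    have h5 : S/(α+(b-α)*S) - s/(α+(b-α)*s) = α*(S-s)/((α+(b-α)*S)*(α+(b-α)*s)) := by
      rw [div_sub_div _ _ hP.ne' hQp.ne']; congr 1; ring
    have h6 : α*(S-s)/((α+(b-α)*S)*(α+(b-α)*s)) ≤ (S-s)/(W*b) := by
      rw [div_le_div_iff₀ (by positivity) (by positivity)]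
      nlinarith [mul_le_mul_of_nonneg_left hkey (by linarith : (0:ℝ) ≤ S - s)]
    have h7 : θ * b⁻¹ = (S-s)/(W*b) := by
      rw [hθ]; field_simp
    linarith [h5, h6, h7.symm.le]
  have hmono : MonotoneOn G (Set.Ici α) := by
    apply monotoneOn_of_deriv_nonneg (convex_Ici α)
    · intro b hb
      exact (hderiv b hb).continuousAt.continuousWithinAt
    · intro b hb
      rw [interior_Ici] at hb
      exact ((hderiv b (Set.mem_Ici.2 (le_of_lt (Set.mem_Ioi.1 hb)))).differentiableAt).differentiableWithinAt
    · intro b hb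
      rw [interior_Ici] at hb
      rw [(hderiv b (Set.mem_Ici.2 (le_of_lt (Set.mem_Ioi.1 hb)))).deriv]
      exact hd_nonneg b (Set.mem_Ici.2 (le_of_lt (Set.mem_Ioi.1 hb)))
  have h8 := hmono (Set.self_mem_Ici) (hβ) hβ
  simp only [hG] at h8
  have h9 : α + (α - α)*S = α := by ring
  have h10 : α + (α - α)*s = α := by ring
  rw [h9, h10] at h8
  nlinarith [h8]

/-- Birkhoff: for a strictly positive matrix `L` with
projective diameter `δ(L)`, one has
`ρ_H(Lx, Ly) ≤ tanh(δ(L)/4) · ρ_H(x,y)` for all strictly positive `x, y`,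
and `tanh(δ(L)/4) < 1`. -/
theorem birkhoff_contraction
    (N : ℕ) [NeZero N] (L : Matrix (Fin N) (Fin N) ℝ)
    (hL : ∀ i j, 0 < L i j) :
    let δ : ℝ := sSup {d : ℝ | ∃ x y : Fin N → ℝ,
      (∀ i, 0 < x i) ∧ (∀ i, 0 < y i) ∧ d = rhoH (L.mulVec x) (L.mulVec y)}
    (∀ x y : Fin N → ℝ, (∀ i, 0 < x i) → (∀ i, 0 < y i) →
      rhoH (L.mulVec x) (L.mulVec y) ≤ Real.tanh (δ / 4) * rhoH x y) ∧
    Real.tanh (δ / 4) < 1 := by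
  intro δ
  have hbdd := rhoH_bddAbove L hL
  refine ⟨?_, tanh_lt_one' _⟩
  intro x y hx hy
  set q : Fin N → ℝ := fun k => y k / x k with hqdef
  set α : ℝ := Finset.univ.inf' Finset.univ_nonempty q with hαdef
  set β : ℝ := Finset.univ.sup' Finset.univ_nonempty q with hβdef
  obtain ⟨i₀, -, hi₀⟩ := Finset.exists_mem_eq_inf' Finset.univ_nonempty q
  obtain ⟨i₁, -, hi₁⟩ := Finset.exists_mem_eq_sup' Finset.univ_nonempty q
  rw [← hαdef] at hi₀
  rw [← hβdef] at hi₁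
  have hqpos : ∀ k, 0 < q k := fun k => div_pos (hy k) (hx k)
  have hαpos : 0 < α := hi₀ ▸ hqpos i₀
  have hαle : ∀ k, α ≤ q k := fun k => Finset.inf'_le q (Finset.mem_univ k)
  have hleβ : ∀ k, q k ≤ β := fun k => Finset.le_sup' q (Finset.mem_univ k)
  have hαβ : α ≤ β := le_trans (hαle i₁) (le_of_eq hi₁.symm)
  have hyx : ∀ k, y k = q k * x k := fun k => (div_mul_cancel₀ (y k) (hx k).ne').symm
  have hrxy : rhoH x y = Real.log β - Real.log α :=
    rhoH_ratio x y q β α hx hyx hleβ hαle ⟨i₁, hi₁.symm⟩ ⟨i₀, hi₀.symm⟩ hαpos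
  have hLx : ∀ i, 0 < L.mulVec x i :=
    mulVec_pos L hL x (fun k => (hx k).le) i₀ (hx i₀)
  rcases le_or_gt β α with hba | hba
  · -- degenerate case: y is proportional to x
    have hqα : ∀ k, q k = α := fun k => le_antisymm (le_trans (hleβ k) hba) (hαle k)
    have hLy : ∀ i, L.mulVec y i = α * L.mulVec x i := by
      intro i
      have hy' : y = (fun k => α * x k + 0 * x k) := funext fun k => by
        rw [hyx k, hqα k]; ring
      rw [hy', mulVec_lin]; ring
    have h0 : rhoH (L.mulVec x) (L.mulVec y) = Real.log α - Real.log α :=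
      rhoH_ratio _ _ (fun _ => α) α α hLx hLy (fun _ => le_rfl) (fun _ => le_rfl)
        ⟨i₀, rfl⟩ ⟨i₀, rfl⟩ hαpos
    have hββ : β = α := le_antisymm hba hαβ
    rw [h0, hrxy, hββ, sub_self, mul_zero]
  · -- main case : α < β
    have hβα : 0 < β - α := by linarith
    set t : Fin N → ℝ := fun k => (q k - α)/(β - α) with htdef
    set u : Fin N → ℝ := fun k => t k * x k with hudef
    have ht0 : ∀ k, 0 ≤ t k := fun k => div_nonneg (by linarith [hαle k]) hβα.le
    have ht1 : ∀ k, t k ≤ 1 := fun k => (div_le_one hβα).2 (by linarith [hleβ k])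
    have hu0 : ∀ k, 0 ≤ u k := fun k => mul_nonneg (ht0 k) (hx k).le
    have hti₁ : t i₁ = 1 := by
      simp only [htdef]
      rw [← hi₁, div_self hβα.ne']
    have hti₀ : t i₀ = 0 := by
      simp only [htdef]
      rw [← hi₀, sub_self, zero_div]
    have hui₁ : 0 < u i₁ := by
      simp only [hudef]; rw [hti₁, one_mul]; exact hx i₁
    have hvk : ∀ k, u k ≤ x k := fun k => by
      simp only [hudef]
      nlinarith [ht1 k, (hx k).le, ht0 k]
    have hvi₀ : 0 < x i₀ - u i₀ := by
      simp only [hudef]; rw [hti₀, zero_mul, sub_zero]; exact hx i₀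
    have hLu : ∀ i, 0 < L.mulVec u i := mulVec_pos L hL u hu0 i₁ hui₁
    have hLsub : ∀ i, L.mulVec (fun k => x k - u k) i = L.mulVec x i - L.mulVec u i := by
      intro i
      have h : (fun k => x k - u k) = (fun k => (1:ℝ) * x k + (-1) * u k) :=
        funext fun k => by ring
      rw [h, mulVec_lin]; ring
    have hLv : ∀ i, 0 < L.mulVec (fun k => x k - u k) i :=
      mulVec_pos L hL _ (fun k => sub_nonneg.2 (hvk k)) i₀ hvi₀
    set σ : Fin N → ℝ := fun i => L.mulVec u i / L.mulVec x i with hσdef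
    have hσpos : ∀ i, 0 < σ i := fun i => div_pos (hLu i) (hLx i)
    have hLxu : ∀ i, L.mulVec u i = σ i * L.mulVec x i := fun i =>
      (div_mul_cancel₀ (L.mulVec u i) (hLx i).ne').symm
    have hσlt1 : ∀ i, σ i < 1 := by
      intro i
      have h := hLv i
      rw [hLsub i] at h
      simp only [hσdef]
      exact (div_lt_one (hLx i)).2 (by linarith)
    set s : ℝ := Finset.univ.inf' Finset.univ_nonempty σ with hsdef
    set S : ℝ := Finset.univ.sup' Finset.univ_nonempty σ with hSdef
    obtain ⟨j₀, -, hj₀⟩ := Finset.exists_mem_eq_inf' Finset.univ_nonempty σ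
    obtain ⟨j₁, -, hj₁⟩ := Finset.exists_mem_eq_sup' Finset.univ_nonempty σ
    rw [← hsdef] at hj₀
    rw [← hSdef] at hj₁
    have hσge : ∀ i, s ≤ σ i := fun i => Finset.inf'_le σ (Finset.mem_univ i)
    have hσle : ∀ i, σ i ≤ S := fun i => Finset.le_sup' σ (Finset.mem_univ i)
    have hs : 0 < s := hj₀ ▸ hσpos j₀
    have hS1 : S < 1 := hj₁ ▸ hσlt1 j₁
    have hsS : s ≤ S := le_trans (hσge j₁) (hσle j₁)
    -- image of y
    have hLy : ∀ i, L.mulVec y i = (α + (β-α) * σ i) * L.mulVec x i := by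
      intro i
      have hy' : y = (fun k => α * x k + (β-α) * u k) := funext fun k => by
        rw [hyx k]
        simp only [hudef, htdef]
        field_simp
        ring
      rw [hy', mulVec_lin, hLxu i]; ring
    have hr1 : rhoH (L.mulVec x) (L.mulVec y)
        = Real.log (α+(β-α)*S) - Real.log (α+(β-α)*s) := by
      apply rhoH_ratio _ _ (fun i => α + (β-α) * σ i) _ _ hLx hLy
      · intro i; nlinarith [hσle i]
      · intro i; nlinarith [hσge i]
      · exact ⟨j₁, by rw [hj₁]⟩
      · exact ⟨j₀, by rw [hj₀]⟩
      · nlinarith [hs]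
    -- the projective diameter bounds D
    set Dfun : ℝ → ℝ := fun ε =>
      Real.log ((1-s+ε)/(s+ε)) - Real.log ((1-S+ε)/(S+ε)) with hDfun
    have hDε : ∀ ε : ℝ, 0 < ε → Dfun ε ≤ δ := by
      intro ε hε
      set uε : Fin N → ℝ := fun k => 1 * u k + ε * x k with huε
      set vε : Fin N → ℝ := fun k => 1 * (x k - u k) + ε * x k with hvε
      have huεpos : ∀ k, 0 < uε k := fun k => by
        simp only [huε, one_mul]
        have := hu0 k
        nlinarith [hx k]
      have hvεpos : ∀ k, 0 < vε k := fun k => by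
        simp only [hvε, one_mul]
        have := sub_nonneg.2 (hvk k)
        nlinarith [hx k]
      have hLuε : ∀ i, L.mulVec uε i = (σ i + ε) * L.mulVec x i := by
        intro i
        simp only [huε]
        rw [mulVec_lin, hLxu i]; ring
      have hLvε : ∀ i, L.mulVec vε i = (1 - σ i + ε) * L.mulVec x i := by
        intro i
        simp only [hvε]
        rw [mulVec_lin, hLsub i, hLxu i]; ring
      have hcomp : rhoH (L.mulVec uε) (L.mulVec vε) = Dfun ε := by
        have := rhoH_ratio (L.mulVec uε) (L.mulVec vε)
          (fun i => (1 - σ i + ε)/(σ i + ε)) ((1-s+ε)/(s+ε)) ((1-S+ε)/(S+ε))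
          (fun i => by rw [hLuε i]; exact mul_pos (add_pos (hσpos i) hε) (hLx i))
          (fun i => by
            rw [hLuε i, hLvε i]
            have hne : σ i + ε ≠ 0 := (add_pos (hσpos i) hε).ne'
            field_simp)
          (fun i => by
            rw [div_le_div_iff₀ (add_pos (hσpos i) hε) (add_pos hs hε)]
            nlinarith [hσge i, hσlt1 i, hσpos i])
          (fun i => by
            rw [div_le_div_iff₀ (add_pos (lt_of_lt_of_le hs hsS) hε)
              (add_pos (hσpos i) hε)]
            nlinarith [hσle i, hσlt1 i, hσpos i])
          ⟨j₀, by rw [hj₀]⟩ ⟨j₁, by rw [hj₁]⟩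
          (div_pos (by linarith) (add_pos (lt_of_lt_of_le hs hsS) hε))
        rw [this, hDfun]
      rw [← hcomp]
      exact le_csSup hbdd ⟨uε, vε, huεpos, hvεpos, rfl⟩
    have hcont : ContinuousAt Dfun 0 := by
      have h1 : ContinuousAt (fun ε : ℝ => (1-s+ε)/(s+ε)) 0 := by
        apply ContinuousAt.div (by fun_prop) (by fun_prop)
        simpa using hs.ne'
      have h2 : ContinuousAt (fun ε : ℝ => (1-S+ε)/(S+ε)) 0 := by
        apply ContinuousAt.div (by fun_prop) (by fun_prop)
        have : 0 < S := lt_of_lt_of_le hs hsS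
        simpa using this.ne'
      have hS0 : 0 < S := lt_of_lt_of_le hs hsS
      have hs1 : s < 1 := lt_of_le_of_lt hsS hS1
      refine (h1.log ?_).sub (h2.log ?_)
      · simp only [add_zero]
        exact (div_pos (by linarith) hs).ne'
      · simp only [add_zero]
        exact (div_pos (by linarith) hS0).ne'
    have hD : Dfun 0 ≤ δ := by
      refine le_of_tendsto (hcont.tendsto.mono_left
        (nhdsWithin_le_nhds (s := Set.Ioi (0:ℝ)))) ?_
      filter_upwards [self_mem_nhdsWithin] with ε hε
      exact hDε ε hε
    have hD0 : Dfun 0 = Real.log ((1-s)/s) - Real.log ((1-S)/S) := by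
      simp [hDfun]
    have harg : Real.log (S/(1-S)) + Real.log ((1-s)/s) = Dfun 0 := by
      rw [hD0, show S/(1-S) = ((1-S)/S)⁻¹ by rw [inv_div], Real.log_inv]
      ring
    rw [hr1, hrxy]
    have hlog : 0 ≤ Real.log β - Real.log α :=
      sub_nonneg.2 (Real.log_le_log hαpos hαβ)
    calc Real.log (α+(β-α)*S) - Real.log (α+(β-α)*s)
        ≤ (S - s)/(S*(1-s)+s*(1-S)+2*Real.sqrt (S*s*(1-S)*(1-s)))
            * (Real.log β - Real.log α) := core hs hsS hS1 hαpos hαβ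
      _ = Real.tanh ((Real.log (S/(1-S)) + Real.log ((1-s)/s))/4)
            * (Real.log β - Real.log α) := by rw [tanh_val hs hsS hS1]
      _ ≤ Real.tanh (δ/4) * (Real.log β - Real.log α) := by
          apply mul_le_mul_of_nonneg_right _ hlog
          apply tanh_mono
          rw [harg]
          gcongr
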